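/- Let m ≥ 0 be an integer and λ, γ > 0 real numbers. For any number T* > E_m(0) there exists a constant C > 0 such that for all t ≥ 0, ∫₀ᵗ e^{−γ(t−τ)} L_m(T* + τ)^{−λ} dτ ≤ C · L_m(T* + t)^{−λ}. -/

import Mathlib

/-- Iterated logarithm: `Lm 0 t = t`, `Lm (m+1) t = log (Lm m t)`. -/
noncomputable def Lm : ℕ → ℝ → ℝ
  | 0, t => t
  | n + 1, t => Real.log (Lm n t)

/-- Iterated exponential: `Em 0 t = t`, `Em (m+1) t = exp (Em m t)`. -/
noncomputable def Em : ℕ → ℝ → ℝ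
  | 0, t => t
  | n + 1, t => Real.exp (Em n t)


lemma Em_succ' (m : ℕ) (t : ℝ) : Em (m + 1) t = Em m (Real.exp t) := by
  induction m with
  | zero => rfl
  | succ n ih => show Real.exp (Em (n+1) t) = Em (n+1) (Real.exp t); rw [ih]; rfl

lemma Em_strictMono (m : ℕ) : StrictMono (Em m) := by
  induction m with
  | zero => exact fun a b h => h
  | succ n ih => exact fun a b h => Real.exp_lt_exp.2 (ih h)

lemma Em_lt_succ (m : ℕ) (t : ℝ) : Em m t < Em (m + 1) t := by
  induction m with
  | zero => exact (Real.add_one_le_exp t).trans_lt' (lt_add_one t)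
  | succ n ih => exact Real.exp_lt_exp.2 ih

lemma Em_mono_m {k m : ℕ} (h : k ≤ m) (t : ℝ) : Em k t ≤ Em m t := by
  induction h with
  | refl => exact le_refl _
  | step h ih => exact ih.trans (Em_lt_succ _ _).le

lemma Lm_succ' (m : ℕ) (t : ℝ) : Lm (m + 1) t = Lm m (Real.log t) := by
  induction m with
  | zero => rfl
  | succ n ih => show Real.log (Lm (n+1) t) = Lm (n+1) (Real.log t); rw [ih]; rfl

lemma Lm_Em (m : ℕ) (t : ℝ) : Lm m (Em m t) = t := by
  induction m with
  | zero => rfl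
  | succ n ih =>
    rw [Lm_succ']
    show Lm n (Real.log (Real.exp (Em n t))) = t
    rw [Real.log_exp, ih]

lemma Lm_aux (m : ℕ) : (∀ x, Em m 0 < x → 0 < Lm m x) ∧
    (∀ x y, Em m 0 < x → x < y → Lm m x < Lm m y) := by
  induction m with
  | zero => exact ⟨fun x hx => hx, fun x y _ h => h⟩
  | succ n ih =>
    have h01 : Em n 0 < Em n 1 := Em_strictMono n zero_lt_one
    have hEm : Em (n + 1) 0 = Em n 1 := by rw [Em_succ', Real.exp_zero]
    have hpos : ∀ x, Em (n + 1) 0 < x → 1 < Lm n x := by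
      intro x hx
      rw [hEm] at hx
      have := ih.2 (Em n 1) x h01 hx
      rwa [Lm_Em] at this
    constructor
    · intro x hx
      exact Real.log_pos (hpos x hx)
    · intro x y hx hxy
      have h1 : 1 < Lm n x := hpos x hx
      have h2 : Lm n x < Lm n y := ih.2 x y ((Em_lt_succ n 0).trans hx) hxy
      exact Real.log_lt_log (lt_trans one_pos h1) h2

lemma Lm_pos {m : ℕ} {x : ℝ} (hx : Em m 0 < x) : 0 < Lm m x := (Lm_aux m).1 x hx

lemma Lm_lt {m : ℕ} {x y : ℝ} (hx : Em m 0 < x) (h : x < y) : Lm m x < Lm m y :=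
  (Lm_aux m).2 x y hx h

lemma Lm_le {m : ℕ} {x y : ℝ} (hx : Em m 0 < x) (h : x ≤ y) : Lm m x ≤ Lm m y := by
  rcases h.eq_or_lt with rfl | h
  · exact le_refl _
  · exact (Lm_lt hx h).le

lemma Lm_ge_one {m : ℕ} {s : ℝ} (h : Em m 1 ≤ s) : 1 ≤ Lm m s := by
  have h01 : Em m 0 < Em m 1 := Em_strictMono m zero_lt_one
  have := Lm_le h01 h
  rwa [Lm_Em] at this

lemma prod_mul_self_ge (m : ℕ) {s : ℝ} (h : Em m 1 ≤ s) :
    s ≤ (∏ k ∈ Finset.range m, Lm k s) * Lm m s := by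
  induction m with
  | zero => show s ≤ (∏ k ∈ Finset.range 0, Lm k s) * Lm 0 s; simp [Lm]
  | succ n ih =>
    have hn : Em n 1 ≤ s := (Em_lt_succ n 1).le.trans h
    have h1 : 1 ≤ Lm (n + 1) s := Lm_ge_one h
    have h2 : s ≤ (∏ k ∈ Finset.range n, Lm k s) * Lm n s := ih hn
    have hs0 : 0 ≤ s := by
      have : (1:ℝ) ≤ Em (n+1) 1 := by
        have := Em_mono_m (Nat.zero_le (n+1)) (1:ℝ); simpa [Em] using this
      linarith
    calc s = s * 1 := (mul_one s).symm
      _ ≤ ((∏ k ∈ Finset.range n, Lm k s) * Lm n s) * Lm (n+1) s := by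
          apply mul_le_mul h2 h1 zero_le_one (le_trans hs0 h2)
      _ = (∏ k ∈ Finset.range (n+1), Lm k s) * Lm (n+1) s := by
          rw [Finset.prod_range_succ]

lemma Lm_continuousOn (m : ℕ) : ContinuousOn (Lm m) (Set.Ioi (Em m 0)) := by
  induction m with
  | zero => exact continuousOn_id
  | succ n ih =>
    have hsub : Set.Ioi (Em (n+1) 0) ⊆ Set.Ioi (Em n 0) :=
      fun x hx => lt_trans (Em_lt_succ n 0) hx
    have : ContinuousOn (Lm n) (Set.Ioi (Em (n+1) 0)) := ih.mono hsub
    exact ContinuousOn.log this fun x hx => (Lm_pos (hsub hx)).ne'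

lemma Lm_hasDerivAt (m : ℕ) {s : ℝ} (h : Em m 0 < s) :
    HasDerivAt (Lm m) ((∏ k ∈ Finset.range m, Lm k s)⁻¹) s := by
  induction m with
  | zero =>
    have := hasDerivAt_id s
    simp only [Finset.range_zero, Finset.prod_empty, inv_one]
    exact this
  | succ n ih =>
    have hn : Em n 0 < s := lt_trans (Em_lt_succ n 0) h
    have hL : 0 < Lm n s := Lm_pos hn
    have := (ih hn).log hL.ne'
    have heq : (∏ k ∈ Finset.range n, Lm k s)⁻¹ / Lm n s
        = (∏ k ∈ Finset.range (n+1), Lm k s)⁻¹ := by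
      rw [Finset.prod_range_succ, mul_inv, div_eq_mul_inv]
    rw [heq] at this
    exact this

/-- Lemma 2.5 of [CaH3]: the convolution integral inequality. -/
theorem stmt1 (m : ℕ) (lam γ : ℝ) (hlam : 0 < lam) (hγ : 0 < γ)
    (Tstar : ℝ) (hT : Em m 0 < Tstar) :
    ∃ C > (0:ℝ), ∀ t ≥ (0:ℝ),
      (∫ τ in (0:ℝ)..t, Real.exp (-γ * (t - τ)) * (Lm m (Tstar + τ)) ^ (-lam))
        ≤ C * (Lm m (Tstar + t)) ^ (-lam) := by
  have hEm0 : (0:ℝ) ≤ Em m 0 := by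
    have := Em_mono_m (Nat.zero_le m) (0:ℝ); simpa [Em] using this
  have hT0 : 0 < Tstar := lt_of_le_of_lt hEm0 hT
  set S : ℝ := max (Em m 1) (max Tstar (2 * lam / γ)) with hSdef
  set t0 : ℝ := S - Tstar with ht0def
  have ht0 : 0 ≤ t0 := sub_nonneg.2 ((le_max_left _ _).trans (le_max_right _ _))
  set f : ℝ → ℝ := fun τ => Lm m (Tstar + τ) ^ (-lam) with hfdef
  have hdom : ∀ τ : ℝ, 0 ≤ τ → Em m 0 < Tstar + τ :=
    fun τ hτ => lt_of_lt_of_le hT (le_add_of_nonneg_right hτ)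
  have hLpos : ∀ τ : ℝ, 0 ≤ τ → 0 < Lm m (Tstar + τ) := fun τ hτ => Lm_pos (hdom τ hτ)
  have hfpos : ∀ τ : ℝ, 0 ≤ τ → 0 < f τ := fun τ hτ => Real.rpow_pos_of_pos (hLpos τ hτ) _
  have hfanti : ∀ a b : ℝ, 0 ≤ a → a ≤ b → f b ≤ f a := by
    intro a b ha hab
    exact Real.rpow_le_rpow_of_nonpos (hLpos a ha)
      (Lm_le (hdom a ha) (by linarith)) (neg_nonpos.2 hlam.le)
  -- continuity of f on Ici 0
  have hcontL : ContinuousOn (fun τ => Lm m (Tstar + τ)) (Set.Ici (0:ℝ)) := by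
    apply (Lm_continuousOn m).comp ((continuous_const.add continuous_id).continuousOn)
    intro τ hτ
    exact hdom τ hτ
  have hfcont : ContinuousOn f (Set.Ici (0:ℝ)) :=
    hcontL.rpow_const fun τ hτ => Or.inl (hLpos τ hτ).ne'
  -- the product and φ
  set P : ℝ → ℝ := fun τ => ∏ k ∈ Finset.range m, Lm k (Tstar + τ) with hPdef
  have hPpos : ∀ τ : ℝ, 0 ≤ τ → 0 < P τ := by
    intro τ hτ
    apply Finset.prod_pos
    intro k hk
    exact Lm_pos (lt_of_le_of_lt
      (Em_mono_m (Finset.mem_range.1 hk).le 0) (hdom τ hτ))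
  set φ : ℝ → ℝ := fun τ => Real.exp (γ*τ) * γ * Lm m (Tstar+τ) ^ (-lam)
      + Real.exp (γ*τ) * ((-lam) * Lm m (Tstar+τ) ^ (-lam-1) * (P τ)⁻¹) with hφdef
  set h : ℝ → ℝ := fun x => Real.exp (γ * x) * f x with hhdef
  have hderiv : ∀ τ : ℝ, 0 ≤ τ → HasDerivAt h (φ τ) τ := by
    intro τ hτ
    have hB : HasDerivAt (fun x => Lm m (Tstar + x)) ((P τ)⁻¹) τ := by
      have := (Lm_hasDerivAt m (hdom τ hτ)).comp τ
        ((hasDerivAt_id τ).const_add Tstar)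
      simp only [mul_one] at this
      exact this
    have hBv := hB.rpow_const (p := -lam) (Or.inl (hLpos τ hτ).ne')
    have hA : HasDerivAt (fun x => Real.exp (γ * x)) (Real.exp (γ * τ) * γ) τ := by
      simpa using (((hasDerivAt_id τ).const_mul γ).exp)
    have := hA.mul hBv
    refine this.congr_deriv ?_
    simp [hφdef, hfdef]
    ring
  have hφbound : ∀ τ : ℝ, t0 ≤ τ → γ/2 * (Real.exp (γ*τ) * f τ) ≤ φ τ := by
    intro τ hτ
    have hτ0 : 0 ≤ τ := le_trans ht0 hτ
    have hsS : S ≤ Tstar + τ := by simp only [ht0def] at hτ; linarith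
    have hs1 : Em m 1 ≤ Tstar + τ := (le_max_left _ _).trans hsS
    have hs2 : 2 * lam / γ ≤ Tstar + τ :=
      ((le_max_right _ _).trans (le_max_right _ _)).trans hsS
    have hL : 0 < Lm m (Tstar + τ) := hLpos τ hτ0
    have hP : 0 < P τ := hPpos τ hτ0
    have hPL : 2 * lam / γ ≤ P τ * Lm m (Tstar + τ) := hs2.trans (prod_mul_self_ge m hs1)
    have key : lam * ((Lm m (Tstar+τ))⁻¹ * (P τ)⁻¹) ≤ γ / 2 := by
      rw [← mul_inv]
      rw [mul_inv_le_iff₀ (by positivity)]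
      have h2 : γ / 2 * (2 * lam / γ) = lam := by field_simp
      nlinarith [mul_le_mul_of_nonneg_left hPL (half_pos hγ).le]
    have hsplit : Lm m (Tstar+τ) ^ (-lam-1)
        = Lm m (Tstar+τ) ^ (-lam) * (Lm m (Tstar+τ))⁻¹ := by
      rw [show (-lam - 1) = -lam + (-1) by ring, Real.rpow_add hL, Real.rpow_neg_one]
    have hE : 0 < Real.exp (γ * τ) := Real.exp_pos _
    have hRpos : 0 < Lm m (Tstar+τ) ^ (-lam) := Real.rpow_pos_of_pos hL _
    simp only [hφdef, hfdef, hsplit]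
    nlinarith [mul_le_mul_of_nonneg_left key
      (mul_nonneg hE.le hRpos.le), hE, hRpos,
      mul_pos hE hRpos]
  have hφnonneg : ∀ τ : ℝ, t0 ≤ τ → 0 ≤ φ τ := by
    intro τ hτ
    have := hφbound τ hτ
    have h1 : 0 < Real.exp (γ*τ) * f τ :=
      mul_pos (Real.exp_pos _) (hfpos τ (le_trans ht0 hτ))
    exact ((mul_pos (half_pos hγ) h1).le).trans this
  have hφcont : ContinuousOn φ (Set.Ici (0:ℝ)) := by
    have hE : ContinuousOn (fun τ => Real.exp (γ*τ)) (Set.Ici (0:ℝ)) :=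
      (Real.continuous_exp.comp (continuous_const.mul continuous_id)).continuousOn
    have hP' : ContinuousOn P (Set.Ici (0:ℝ)) := by
      apply continuousOn_finset_prod
      intro k hk
      apply (Lm_continuousOn k).comp ((continuous_const.add continuous_id).continuousOn)
      intro τ hτ
      exact lt_of_le_of_lt (Em_mono_m (Finset.mem_range.1 hk).le 0) (hdom τ hτ)
    have h1 : ContinuousOn (fun τ => Lm m (Tstar+τ) ^ (-lam)) (Set.Ici (0:ℝ)) :=
      hcontL.rpow_const fun τ hτ => Or.inl (hLpos τ hτ).ne'
    have h2 : ContinuousOn (fun τ => Lm m (Tstar+τ) ^ (-lam-1)) (Set.Ici (0:ℝ)) :=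
      hcontL.rpow_const fun τ hτ => Or.inl (hLpos τ hτ).ne'
    exact ((hE.mul continuousOn_const).mul h1).add
      (hE.mul ((continuousOn_const.mul h2).mul
        (hP'.inv₀ fun τ hτ => (hPpos τ hτ).ne')))
  -- integrability
  have hgcont : ContinuousOn (fun τ => Real.exp (γ*τ) * f τ) (Set.Ici (0:ℝ)) :=
    (Real.continuous_exp.comp (continuous_const.mul continuous_id)).continuousOn.mul hfcont
  have hInt : ∀ a b : ℝ, 0 ≤ a → 0 ≤ b →
      IntervalIntegrable (fun τ => Real.exp (γ*τ) * f τ) MeasureTheory.volume a b := by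
    intro a b ha hb
    apply (hgcont.mono _).intervalIntegrable
    intro x hx
    rcases Set.mem_uIcc.1 hx with ⟨h1, _⟩ | ⟨h1, _⟩
    · exact le_trans ha h1
    · exact le_trans hb h1
  -- basic bound on J 0 b
  have hJ0 : ∀ b : ℝ, 0 ≤ b →
      (∫ τ in (0:ℝ)..b, Real.exp (γ*τ) * f τ) ≤ b * (Real.exp (γ*b) * f 0) := by
    intro b hb
    calc (∫ τ in (0:ℝ)..b, Real.exp (γ*τ) * f τ)
        ≤ ∫ _ in (0:ℝ)..b, Real.exp (γ*b) * f 0 := by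
          apply intervalIntegral.integral_mono_on hb (hInt 0 b le_rfl hb)
            intervalIntegrable_const
          intro x hx
          exact mul_le_mul
            (Real.exp_le_exp.2 (mul_le_mul_of_nonneg_left hx.2 hγ.le))
            (hfanti 0 x le_rfl hx.1) (hfpos x hx.1).le (Real.exp_pos _).le
      _ = b * (Real.exp (γ*b) * f 0) := by
          rw [intervalIntegral.integral_const]; simp
  set C2 : ℝ := t0 * f 0 / f t0 with hC2def
  have hft0 : 0 < f t0 := hfpos t0 ht0
  have hC2 : 0 ≤ C2 := div_nonneg (mul_nonneg ht0 (hfpos 0 le_rfl).le) hft0.le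
  refine ⟨max 1 (C2 + 2/γ), lt_of_lt_of_le one_pos (le_max_left _ _), ?_⟩
  intro t ht
  have hft : 0 < f t := hfpos t ht
  have hCge : C2 + 2/γ ≤ max 1 (C2 + 2/γ) := le_max_right _ _
  have hrw : (∫ τ in (0:ℝ)..t, Real.exp (-γ * (t - τ)) * Lm m (Tstar + τ) ^ (-lam))
      = Real.exp (-(γ*t)) * ∫ τ in (0:ℝ)..t, Real.exp (γ*τ) * f τ := by
    rw [← intervalIntegral.integral_const_mul]
    apply intervalIntegral.integral_congr
    intro τ _
    have hexp : Real.exp (-γ*(t-τ)) = Real.exp (-(γ*t)) * Real.exp (γ*τ) := by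
      rw [← Real.exp_add]; congr 1; ring
    simp only [hfdef]
    rw [hexp, mul_assoc]
  rcases le_or_gt t t0 with hcase | hcase
  · -- small times
    rw [hrw]
    have h1 := hJ0 t ht
    have h3 : Real.exp (-(γ*t)) * (t * (Real.exp (γ*t) * f 0)) = t * f 0 := by
      rw [Real.exp_neg]
      field_simp
    have h4 : t * f 0 ≤ C2 * f t := by
      have ha : t * f 0 ≤ t0 * f 0 := mul_le_mul_of_nonneg_right hcase (hfpos 0 le_rfl).le
      have he : C2 * f t0 = t0 * f 0 := by rw [hC2def]; field_simp
      have hb : C2 * f t0 ≤ C2 * f t := mul_le_mul_of_nonneg_left (hfanti t t0 ht hcase) hC2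
      linarith
    have h5 : C2 * f t ≤ max 1 (C2 + 2/γ) * f t := by
      apply mul_le_mul_of_nonneg_right _ hft.le
      have : C2 ≤ C2 + 2/γ := le_add_of_nonneg_right (by positivity)
      linarith
    calc Real.exp (-(γ*t)) * ∫ τ in (0:ℝ)..t, Real.exp (γ*τ) * f τ
        ≤ Real.exp (-(γ*t)) * (t * (Real.exp (γ*t) * f 0)) :=
          mul_le_mul_of_nonneg_left h1 (Real.exp_pos _).le
      _ = t * f 0 := h3
      _ ≤ C2 * f t := h4
      _ ≤ max 1 (C2 + 2/γ) * f t := h5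
  · -- large times
    have htt0 : t0 ≤ t := hcase.le
    have huIcc : Set.uIcc t0 t = Set.Icc t0 t := Set.uIcc_of_le htt0
    have hsub : Set.uIcc t0 t ⊆ Set.Ici (0:ℝ) := by
      rw [huIcc]; exact fun x hx => le_trans ht0 hx.1
    have hφint : IntervalIntegrable φ MeasureTheory.volume t0 t :=
      (hφcont.mono hsub).intervalIntegrable
    have hFTC : (∫ τ in t0..t, φ τ) = h t - h t0 := by
      apply intervalIntegral.integral_eq_sub_of_hasDerivAt _ hφint
      intro x hx
      exact hderiv x (le_trans ht0 ((huIcc ▸ hx).1))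
    have hJ2 : (∫ τ in t0..t, Real.exp (γ*τ) * f τ) ≤ (2/γ) * (h t - h t0) := by
      rw [← hFTC, ← intervalIntegral.integral_const_mul]
      apply intervalIntegral.integral_mono_on htt0 (hInt t0 t ht0 ht)
        (hφint.const_mul _)
      intro x hx
      have hb := hφbound x hx.1
      calc Real.exp (γ*x) * f x = (2/γ) * (γ/2 * (Real.exp (γ*x) * f x)) := by
            field_simp
        _ ≤ (2/γ) * φ x := mul_le_mul_of_nonneg_left hb (by positivity)
    have hmono : h t0 ≤ h t := by
      have h0 : 0 ≤ ∫ τ in t0..t, φ τ :=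
        intervalIntegral.integral_nonneg htt0 (fun x hx => hφnonneg x hx.1)
      rw [hFTC] at h0
      linarith
    have hht0pos : 0 < h t0 := mul_pos (Real.exp_pos _) hft0
    have hsplitJ : (∫ τ in (0:ℝ)..t, Real.exp (γ*τ) * f τ)
        = (∫ τ in (0:ℝ)..t0, Real.exp (γ*τ) * f τ) + ∫ τ in t0..t, Real.exp (γ*τ) * f τ :=
      (intervalIntegral.integral_add_adjacent_intervals (hInt 0 t0 le_rfl ht0)
        (hInt t0 t ht0 ht)).symm
    have hkey : t0 * (Real.exp (γ*t0) * f 0) = C2 * h t0 := by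
      rw [hC2def, hhdef]
      field_simp
    have hsum : (∫ τ in (0:ℝ)..t, Real.exp (γ*τ) * f τ) ≤ (C2 + 2/γ) * h t := by
      have l1 : C2 * h t0 ≤ C2 * h t := mul_le_mul_of_nonneg_left hmono hC2
      have l2 : (2/γ) * (h t - h t0) ≤ (2/γ) * h t - 0 := by
        have : 0 ≤ (2/γ) * h t0 := mul_nonneg (by positivity) hht0pos.le
        nlinarith
      have hJ1 := hJ0 t0 ht0
      rw [hsplitJ]
      have := hkey ▸ hJ1
      nlinarith
    rw [hrw]
    have hfin : Real.exp (-(γ*t)) * ((C2 + 2/γ) * h t) = (C2 + 2/γ) * f t := by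
      rw [hhdef, Real.exp_neg]
      field_simp
    calc Real.exp (-(γ*t)) * ∫ τ in (0:ℝ)..t, Real.exp (γ*τ) * f τ
        ≤ Real.exp (-(γ*t)) * ((C2 + 2/γ) * h t) :=
          mul_le_mul_of_nonneg_left hsum (Real.exp_pos _).le
      _ = (C2 + 2/γ) * f t := hfin
      _ ≤ max 1 (C2 + 2/γ) * f t := mul_le_mul_of_nonneg_right hCge hft.le
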